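/- Let G be a connected simple graph on N vertices with diameter D. For every t < D, there do not exist matrices A^(1), …, A^(t), each complying with G, whose product A^(t) ⋯ A^(1) equals (1/N)·𝟙𝟙ᵀ, where 𝟙𝟙ᵀ is the N×N all-ones matrix. In other words, linear consensus protocols on G require at least D iterations. -/

import Mathlib

/-- A real `N × N` matrix complies with the graph `G` when its off-diagonal
entries vanish outside the edges of `G`. -/
def SimpleGraph.Complies {N : ℕ} (G : SimpleGraph (Fin N))
    (A : Matrix (Fin N) (Fin N) ℝ) : Prop :=
  ∀ i j : Fin N, i ≠ j → ¬ G.Adj i j → A i j = 0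

lemma prod_entry_zero {N : ℕ} (G : SimpleGraph (Fin N)) (hG : G.Connected)
    (L : List (Matrix (Fin N) (Fin N) ℝ)) (hL : ∀ B ∈ L, G.Complies B) :
    ∀ i j : Fin N, L.length < G.dist i j → L.prod i j = 0 := by
  induction L with
  | nil =>
    intro i j h
    have hij : i ≠ j := by rintro rfl; simp [SimpleGraph.dist_self] at h
    simp [Matrix.one_apply, hij]
  | cons B L ih =>
    intro i j h
    rw [List.prod_cons, Matrix.mul_apply]
    apply Finset.sum_eq_zero
    intro k _
    by_cases hBk : B i k = 0
    · simp [hBk]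
    have hdik : G.dist i k ≤ 1 := by
      by_cases hik : i = k
      · subst hik; simp [SimpleGraph.dist_self]
      by_cases hadj : G.Adj i k
      · exact le_of_eq ((SimpleGraph.dist_eq_one_iff_adj).2 hadj)
      · exact absurd (hL B List.mem_cons_self i k hik hadj) hBk
    have htri := hG.dist_triangle (u := i) (v := k) (w := j)
    have : L.length < G.dist k j := by
      simp only [List.length_cons] at h
      omega
    rw [ih (fun C hC => hL C (List.mem_cons_of_mem _ hC)) k j this, mul_zero]

/-- On a connected graph of diameter `D`, no product of fewer than `D`
compliant matrices can equal `(1/N)·𝟙𝟙ᵀ`: linear consensus protocols need at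
least `D` iterations. -/
theorem no_consensus_in_less_than_diam_steps {N : ℕ} (G : SimpleGraph (Fin N))
    (hG : G.Connected) (t : ℕ) (ht : t < G.diam) :
    ¬ ∃ A : Fin t → Matrix (Fin N) (Fin N) ℝ,
        (∀ s : Fin t, G.Complies (A s)) ∧
        (List.ofFn A).reverse.prod = Matrix.of (fun _ _ => (N : ℝ)⁻¹) := by
  rintro ⟨A, hA, hprod⟩
  have hne : Nonempty (Fin N) := hG.nonempty
  obtain ⟨i, j, hij⟩ := SimpleGraph.exists_dist_eq_diam (G := G)
  have hz := prod_entry_zero G hG (List.ofFn A).reverse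
    (by intro B hB
        rw [List.mem_reverse, List.mem_ofFn] at hB
        obtain ⟨s, rfl⟩ := hB
        exact hA s) i j (by simpa [hij] using ht)
  rw [hprod] at hz
  have hN : (N : ℝ) ≠ 0 := Nat.cast_ne_zero.2 (Fin.pos i).ne'
  exact inv_ne_zero hN (by simpa using hz)
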